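/- The function f(s, t) = arccosh(√(1 + s²) · cosh t) / √(t² + s²), defined a priori on ℝ² \ {0}, extends to a continuous function on all of ℝ² with value 1 at the origin. -/

import Mathlib

/-- The inverse hyperbolic cosine, `arcosh x = log (x + √(x² − 1))`
(Mathlib has `Real.arsinh` but no `arcosh` here, so we define it). -/
noncomputable def Real.arcosh' (x : ℝ) : ℝ := Real.log (x + Real.sqrt (x ^ 2 - 1))

open Real

/-- `sinh x ≤ x * cosh x` for `0 ≤ x`. -/
lemma my_sinh_le_mul_cosh {x : ℝ} (hx : 0 ≤ x) : Real.sinh x ≤ x * Real.cosh x := by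
  have h : MonotoneOn (fun v : ℝ => v * Real.cosh v - Real.sinh v) (Set.Ici 0) := by
    apply monotoneOn_of_deriv_nonneg (convex_Ici 0)
    · exact ((continuous_id.mul Real.continuous_cosh).sub Real.continuous_sinh).continuousOn
    · intro v hv
      exact (((differentiableAt_id.mul Real.differentiable_cosh.differentiableAt).sub
        Real.differentiable_sinh.differentiableAt)).differentiableWithinAt
    · intro v hv
      rw [interior_Ici, Set.mem_Ioi] at hv
      have : deriv (fun v : ℝ => v * Real.cosh v - Real.sinh v) v = v * Real.sinh v := by
        rw [deriv_fun_sub, deriv_fun_mul] <;>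
          simp [Real.deriv_cosh, Real.deriv_sinh, mul_comm] <;>
          exact (differentiableAt_id.mul Real.differentiable_cosh.differentiableAt)
      rw [this]
      exact mul_nonneg hv.le (Real.sinh_nonneg_iff.2 hv.le)
  have h0 : (0:ℝ) * Real.cosh 0 - Real.sinh 0 ≤ x * Real.cosh x - Real.sinh x :=
    h (Set.self_mem_Ici) hx hx
  simp at h0
  linarith

lemma my_arsinh_le_self {x : ℝ} (hx : 0 ≤ x) : Real.arsinh x ≤ x := by
  rw [← Real.sinh_le_sinh, Real.sinh_arsinh]
  exact Real.self_le_sinh_iff.2 hx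

lemma my_le_arsinh_mul {x : ℝ} (hx : 0 ≤ x) :
    x ≤ Real.arsinh x * Real.sqrt (1 + x ^ 2) := by
  have := my_sinh_le_mul_cosh (Real.arsinh_nonneg_iff.2 hx)
  rwa [Real.sinh_arsinh, Real.cosh_arsinh] at this

noncomputable def gg (p : ℝ × ℝ) : ℝ :=
  Real.sqrt (p.1 ^ 2 * Real.cosh p.2 ^ 2 + Real.sinh p.2 ^ 2)

noncomputable def rr (p : ℝ × ℝ) : ℝ := Real.sqrt (p.2 ^ 2 + p.1 ^ 2)

lemma gg_nonneg (p : ℝ × ℝ) : 0 ≤ gg p := Real.sqrt_nonneg _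

lemma gg_cont : Continuous gg := by
  unfold gg
  fun_prop

lemma rr_cont : Continuous rr := by
  unfold rr
  fun_prop

lemma rr_pos {p : ℝ × ℝ} (hp : p ≠ (0, 0)) : 0 < rr p := by
  unfold rr
  apply Real.sqrt_pos.2
  rcases (Prod.mk.injEq _ _ _ _ ▸ hp : ¬(p.1 = 0 ∧ p.2 = 0)) with h
  · rcases eq_or_ne p.1 0 with h1 | h1
    · have h2 : p.2 ≠ 0 := fun h2 => h ⟨h1, h2⟩
      positivity
    · positivity

/-- `rr p ≤ gg p`. -/
lemma rr_le_gg (p : ℝ × ℝ) : rr p ≤ gg p := by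
  unfold rr gg
  apply Real.sqrt_le_sqrt
  have h1 : p.1 ^ 2 ≤ p.1 ^ 2 * Real.cosh p.2 ^ 2 := by
    have hc2 : 1 ≤ Real.cosh p.2 ^ 2 := one_le_pow₀ (Real.one_le_cosh p.2)
    nlinarith [sq_nonneg p.1]
  have h2 : p.2 ^ 2 ≤ Real.sinh p.2 ^ 2 := by
    rcases le_or_gt 0 p.2 with h | h
    · nlinarith [Real.self_le_sinh_iff.2 h]
    · have := Real.sinh_le_self_iff.2 h.le
      nlinarith [Real.sinh_neg_iff.2 h]
  linarith

/-- `gg p ≤ rr p * cosh (rr p)`. -/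
lemma gg_le (p : ℝ × ℝ) : gg p ≤ rr p * Real.cosh (rr p) := by
  have habs : |p.2| ≤ rr p := by
    rw [← Real.sqrt_sq_eq_abs]
    exact Real.sqrt_le_sqrt (by nlinarith [sq_nonneg p.1])
  have hcosh : Real.cosh p.2 ≤ Real.cosh (rr p) := by
    rw [Real.cosh_le_cosh]
    exact habs.trans (le_abs_self _)
  have hrc : 0 ≤ rr p * Real.cosh (rr p) :=
    mul_nonneg (Real.sqrt_nonneg _) (Real.cosh_pos _).le
  unfold gg
  rw [show rr p * Real.cosh (rr p) = Real.sqrt ((rr p * Real.cosh (rr p)) ^ 2) from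
    (Real.sqrt_sq hrc).symm]
  apply Real.sqrt_le_sqrt
  have hr2 : rr p ^ 2 = p.2 ^ 2 + p.1 ^ 2 := Real.sq_sqrt (by positivity)
  have hsinh : Real.sinh p.2 ^ 2 ≤ p.2 ^ 2 * Real.cosh p.2 ^ 2 := by
    rcases le_or_gt 0 p.2 with h | h
    · nlinarith [my_sinh_le_mul_cosh h, Real.sinh_nonneg_iff.2 h]
    · have h' : 0 ≤ -p.2 := by linarith
      have := my_sinh_le_mul_cosh h'
      rw [Real.sinh_neg, Real.cosh_neg] at this
      nlinarith [Real.sinh_nonpos_iff.2 h.le]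
  have hc1 : 1 ≤ Real.cosh p.2 := Real.one_le_cosh p.2
  have hcc : Real.cosh p.2 ^ 2 ≤ Real.cosh (rr p) ^ 2 := by
    nlinarith [Real.cosh_pos p.2]
  nlinarith [sq_nonneg p.1, sq_nonneg p.2, Real.cosh_pos p.2]

noncomputable def FF (p : ℝ × ℝ) : ℝ :=
  if p = (0, 0) then 1 else Real.arsinh (gg p) / rr p

lemma FF_lower (p : ℝ × ℝ) : 1 / Real.sqrt (1 + gg p ^ 2) ≤ FF p := by
  unfold FF
  split_ifs with h
  · subst h
    simp [gg]
  · have hr := rr_pos h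
    have hg := gg_nonneg p
    have hs : (0:ℝ) < Real.sqrt (1 + gg p ^ 2) := Real.sqrt_pos.2 (by positivity)
    rw [div_le_div_iff₀ hs hr]
    have h1 := my_le_arsinh_mul hg
    have h2 := rr_le_gg p
    calc 1 * rr p = rr p := one_mul _
      _ ≤ gg p := h2
      _ ≤ Real.arsinh (gg p) * Real.sqrt (1 + gg p ^ 2) := h1

lemma FF_upper (p : ℝ × ℝ) : FF p ≤ Real.cosh (rr p) := by
  unfold FF
  split_ifs with h
  · subst h
    simp [rr, Real.one_le_cosh]
  · have hr := rr_pos h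
    rw [div_le_iff₀ hr]
    calc Real.arsinh (gg p) ≤ gg p := my_arsinh_le_self (gg_nonneg p)
      _ ≤ rr p * Real.cosh (rr p) := gg_le p
      _ = Real.cosh (rr p) * rr p := mul_comm _ _

lemma FF_cont : Continuous FF := by
  rw [continuous_iff_continuousAt]
  intro p
  rcases eq_or_ne p (0, 0) with hp | hp
  · subst hp
    have hF0 : FF (0, 0) = 1 := by simp [FF]
    rw [ContinuousAt, hF0]
    have hL : Filter.Tendsto (fun p => 1 / Real.sqrt (1 + gg p ^ 2)) (nhds ((0:ℝ), (0:ℝ)))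
        (nhds 1) := by
      have : Continuous (fun p => 1 / Real.sqrt (1 + gg p ^ 2)) := by
        apply Continuous.div continuous_const
        · exact (continuous_const.add (gg_cont.pow 2)).sqrt
        · intro q
          have : (0:ℝ) < Real.sqrt (1 + gg q ^ 2) :=
            Real.sqrt_pos.2 (by positivity)
          exact this.ne'
      have h0 : 1 / Real.sqrt (1 + gg ((0:ℝ), (0:ℝ)) ^ 2) = 1 := by
        simp [gg]
      have ht := this.continuousAt (x := ((0:ℝ), (0:ℝ)))
      rw [ContinuousAt] at ht
      rwa [h0] at ht
    have hU : Filter.Tendsto (fun p => Real.cosh (rr p)) (nhds ((0:ℝ), (0:ℝ))) (nhds 1) := by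
      have : Continuous (fun p => Real.cosh (rr p)) := Real.continuous_cosh.comp rr_cont
      have h0 : Real.cosh (rr ((0:ℝ), (0:ℝ))) = 1 := by simp [rr]
      have ht := this.continuousAt (x := ((0:ℝ), (0:ℝ)))
      rw [ContinuousAt] at ht
      rwa [h0] at ht
    exact tendsto_of_tendsto_of_tendsto_of_le_of_le hL hU FF_lower FF_upper
  · have hopen : IsOpen {q : ℝ × ℝ | q ≠ (0, 0)} := isOpen_ne
    have heq : FF =ᶠ[nhds p] fun q => Real.arsinh (gg q) / rr q := by
      filter_upwards [hopen.mem_nhds hp] with q hq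
      simp only [FF, if_neg hq]
    apply ContinuousAt.congr _ heq.symm
    exact ContinuousAt.div ((Real.continuous_arsinh.comp gg_cont).continuousAt)
      rr_cont.continuousAt (rr_pos hp).ne'

lemma arcosh_eq (p : ℝ × ℝ) :
    Real.arcosh' (Real.sqrt (1 + p.1 ^ 2) * Real.cosh p.2) = Real.arsinh (gg p) := by
  set x := Real.sqrt (1 + p.1 ^ 2) * Real.cosh p.2 with hx
  have hxpos : 0 < x := mul_pos (Real.sqrt_pos.2 (by positivity)) (Real.cosh_pos _)
  have hx2 : x ^ 2 = (1 + p.1 ^ 2) * Real.cosh p.2 ^ 2 := by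
    rw [hx, mul_pow, Real.sq_sqrt (by positivity)]
  have hg2 : gg p ^ 2 = p.1 ^ 2 * Real.cosh p.2 ^ 2 + Real.sinh p.2 ^ 2 := by
    unfold gg
    rw [Real.sq_sqrt (by positivity)]
  have hkey : x ^ 2 - 1 = gg p ^ 2 := by
    rw [hx2, hg2]
    have := Real.cosh_sq p.2
    nlinarith [Real.sinh_sq p.2]
  have h1 : Real.sqrt (x ^ 2 - 1) = gg p := by
    rw [hkey, Real.sqrt_sq (gg_nonneg p)]
  have h2 : Real.sqrt (1 + gg p ^ 2) = x := by
    rw [← hkey]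
    have : 1 + (x ^ 2 - 1) = x ^ 2 := by ring
    rw [this, Real.sqrt_sq hxpos.le]
  rw [Real.arcosh', Real.arsinh, h1, h2, add_comm]

theorem arcosh_quotient_extends_continuously :
    ∃ F : ℝ × ℝ → ℝ, Continuous F ∧ F (0, 0) = 1 ∧
      ∀ p : ℝ × ℝ, p ≠ (0, 0) →
        F p = Real.arcosh' (Real.sqrt (1 + p.1 ^ 2) * Real.cosh p.2) /
          Real.sqrt (p.2 ^ 2 + p.1 ^ 2) := by
  refine ⟨FF, FF_cont, by simp [FF], fun p hp => ?_⟩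
  simp only [FF, if_neg hp, arcosh_eq, rr]
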